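/- Let X be a locally compact space with countable base, V ⊆ X an open set, and H : V → Measure X a kernel with H(x)(X) ≤ 1 for all x ∈ V such that x ↦ ∫ f dH(x) is continuous on V for every bounded Borel f. If (f_n) is a sequence of Borel functions on X with 0 ≤ f_n ≤ 1, then there exist a subsequence (f_{n_k}) and a Borel function f with 0 ≤ f ≤ 1 such that ∫ f_{n_k} dH(x) → ∫ f dH(x) for every x ∈ V. -/

import Mathlib

open MeasureTheory Filter Topology ENNReal

theorem pointwise_convergent_subsequence_of_strong_feller
    {X : Type*} [TopologicalSpace X] [LocallyCompactSpace X]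
    [SecondCountableTopology X] [MeasurableSpace X] [BorelSpace X]
    (V : Set X) (hV : IsOpen V)
    (H : X → Measure X)
    (hH_sub : ∀ x ∈ V, H x Set.univ ≤ 1)
    (hH_cont : ∀ f : X → ℝ, Measurable f → (∃ C, ∀ x, |f x| ≤ C) →
      ContinuousOn (fun x => ∫ y, f y ∂(H x)) V)
    (f : ℕ → X → ℝ) (hf_meas : ∀ n, Measurable (f n))
    (hf_bd : ∀ n x, 0 ≤ f n x ∧ f n x ≤ 1) :
    ∃ (φ : ℕ → ℕ), StrictMono φ ∧
      ∃ g : X → ℝ, Measurable g ∧ (∀ x, 0 ≤ g x ∧ g x ≤ 1) ∧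
        ∀ x ∈ V, Tendsto (fun k => ∫ y, f (φ k) y ∂(H x)) atTop
          (𝓝 (∫ y, g y ∂(H x))) := by
  classical
  rcases Set.eq_empty_or_nonempty V with hVe | ⟨v₀, hv₀⟩
  · exact ⟨id, strictMono_id, f 0, hf_meas 0, hf_bd 0,
      fun x hx => absurd hx (by simp [hVe])⟩
  haveI : Nonempty V := ⟨⟨v₀, hv₀⟩⟩
  -- Step A: a dense sequence in V
  obtain ⟨x, hxV, hdense⟩ :
      ∃ x : ℕ → X, (∀ m, x m ∈ V) ∧ ∀ z ∈ V, z ∈ closure (Set.range x) := by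
    refine ⟨fun m => (TopologicalSpace.denseSeq V m : X),
      fun m => (TopologicalSpace.denseSeq V m).2, fun z hz => ?_⟩
    have h1 : (⟨z, hz⟩ : V) ∈ closure (Set.range (TopologicalSpace.denseSeq V)) :=
      (TopologicalSpace.denseRange_denseSeq V) _
    have h2 : z ∈ closure (Subtype.val '' Set.range (TopologicalSpace.denseSeq V)) :=
      image_closure_subset_closure_image continuous_subtype_val
        (Set.mem_image_of_mem _ h1)
    have h3 : Subtype.val '' Set.range (TopologicalSpace.denseSeq V)
        = Set.range (fun m => ((TopologicalSpace.denseSeq V m : X))) := by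
      rw [← Set.range_comp]; rfl
    rw [h3] at h2
    exact h2
  -- Step B: the reference measure σ
  set σ : Measure X := Measure.sum (fun m => ((2 : ℝ≥0∞)⁻¹) ^ (m + 1) • H (x m)) with hσdef
  have hσle : σ Set.univ ≤ 2 := by
    rw [hσdef, Measure.sum_apply _ MeasurableSet.univ]
    calc ∑' m, (((2 : ℝ≥0∞)⁻¹) ^ (m + 1) • H (x m)) Set.univ
        ≤ ∑' m : ℕ, ((2 : ℝ≥0∞)⁻¹) ^ m := by
          refine ENNReal.tsum_le_tsum fun m => ?_
          rw [Measure.smul_apply, smul_eq_mul]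
          calc ((2 : ℝ≥0∞)⁻¹) ^ (m + 1) * H (x m) Set.univ
              ≤ ((2 : ℝ≥0∞)⁻¹) ^ (m + 1) * 1 := by
                gcongr
                exact hH_sub _ (hxV m)
            _ ≤ ((2 : ℝ≥0∞)⁻¹) ^ m := by
                rw [mul_one]
                exact pow_le_pow_of_le_one (by positivity) (by norm_num) (Nat.le_succ m)
      _ = 2 := by rw [ENNReal.tsum_geometric, ENNReal.one_sub_inv_two, inv_inv]
  haveI hσfin : IsFiniteMeasure σ := ⟨lt_of_le_of_lt hσle (by norm_num)⟩
  -- Step C: absolute continuity H z ≪ σ for z ∈ V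
  have habs : ∀ z ∈ V, H z ≪ σ := by
    intro z hz
    refine Measure.AbsolutelyContinuous.mk fun A hA hA0 => ?_
    have hterm : ∀ m, H (x m) A = 0 := by
      intro m
      rw [hσdef, Measure.sum_apply _ hA] at hA0
      have h1 := ENNReal.tsum_eq_zero.mp hA0 m
      rw [Measure.smul_apply, smul_eq_mul, mul_eq_zero] at h1
      rcases h1 with h1 | h1
      · exact absurd h1 (pow_ne_zero _ (by norm_num))
      · exact h1
    set Find : X → ℝ := A.indicator 1 with hFind
    have hFmeas : Measurable Find := measurable_one.indicator hA
    have hFbd : ∃ C, ∀ y, |Find y| ≤ C := ⟨1, fun y => by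
      by_cases hy : y ∈ A <;>
        simp [hFind, Set.indicator_of_mem, Set.indicator_of_notMem, hy]⟩
    have hcont := hH_cont Find hFmeas hFbd
    have hval : ∀ w, ∫ y, Find y ∂(H w) = ((H w) A).toReal := fun w =>
      integral_indicator_one hA
    have hzero : ∀ w ∈ Set.range x, (fun w => ∫ y, Find y ∂(H w)) w = 0 := by
      rintro w ⟨m, rfl⟩
      simp only
      rw [hval, hterm m, ENNReal.toReal_zero]
    have hne : (𝓝[Set.range x] z).NeBot := mem_closure_iff_nhdsWithin_neBot.mp (hdense z hz)
    have hT1 : Tendsto (fun w => ∫ y, Find y ∂(H w)) (𝓝[Set.range x] z)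
        (𝓝 (∫ y, Find y ∂(H z))) :=
      ((hcont z hz).continuousAt (hV.mem_nhds hz)).tendsto.mono_left nhdsWithin_le_nhds
    have hT2 : Tendsto (fun w => ∫ y, Find y ∂(H w)) (𝓝[Set.range x] z) (𝓝 0) := by
      refine Tendsto.congr' ?_ tendsto_const_nhds
      exact eventually_nhdsWithin_of_forall fun w hw => (hzero w hw).symm
    have h0 : ((H z) A).toReal = 0 := by
      rw [← hval z]; exact tendsto_nhds_unique hT1 hT2
    have hfin : (H z) A ≠ ⊤ :=
      (lt_of_le_of_lt (measure_mono (Set.subset_univ A))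
        (lt_of_le_of_lt (hH_sub z hz) one_lt_top)).ne
    exact ((ENNReal.toReal_eq_zero_iff _).mp h0).resolve_right hfin
  -- Step D: the f n as elements of L²(σ)
  haveI : Fact ((1 : ℝ≥0∞) ≤ 2) := ⟨one_le_two⟩
  haveI : Fact ((2 : ℝ≥0∞) ≠ ⊤) := ⟨by norm_num⟩
  have hmem : ∀ n, MemLp (f n) 2 σ := fun n =>
    MemLp.of_bound (hf_meas n).aestronglyMeasurable 1 (ae_of_all _ fun y => by
      rw [Real.norm_eq_abs, abs_of_nonneg (hf_bd n y).1]; exact (hf_bd n y).2)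
  set F : ℕ → Lp ℝ 2 σ := fun n => (hmem n).toLp (f n) with hFdef
  have hFnorm : ∀ n, ‖F n‖ ≤ 2 := by
    intro n
    rw [hFdef, Lp.norm_toLp]
    have h1 : eLpNorm (f n) 2 σ ≤ σ Set.univ ^ (2 : ℝ≥0∞).toReal⁻¹ * ENNReal.ofReal 1 :=
      eLpNorm_le_of_ae_bound (ae_of_all _ fun y => by
        rw [Real.norm_eq_abs, abs_of_nonneg (hf_bd n y).1]; exact (hf_bd n y).2)
    have h2 : σ Set.univ ^ (2 : ℝ≥0∞).toReal⁻¹ * ENNReal.ofReal 1 ≤ 2 := by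
      rw [ENNReal.ofReal_one, mul_one]
      calc σ Set.univ ^ (2 : ℝ≥0∞).toReal⁻¹ ≤ (2 : ℝ≥0∞) ^ (2 : ℝ≥0∞).toReal⁻¹ := by
            exact ENNReal.rpow_le_rpow hσle (by norm_num)
        _ ≤ (2 : ℝ≥0∞) ^ (1 : ℝ) := by
            refine ENNReal.rpow_le_rpow_of_exponent_le (by norm_num) (by norm_num)
        _ = 2 := by simp
    have h3 := le_trans h1 h2
    have := ENNReal.toReal_mono (by norm_num) h3
    simpa using this
  -- Step E: a dense sequence in L²(σ)
  obtain ⟨e, he⟩ : ∃ e : ℕ → Lp ℝ 2 σ, DenseRange e :=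
    ⟨TopologicalSpace.denseSeq _, TopologicalSpace.denseRange_denseSeq _⟩
  -- Step F: diagonal extraction via compactness of a product of intervals
  set a : ℕ → ℕ → ℝ := fun n j => (inner ℝ (F n) (e j) : ℝ) with hadef
  have haK : ∀ n, a n ∈ Set.pi Set.univ (fun j => Set.Icc (-(2 * ‖e j‖)) (2 * ‖e j‖)) := by
    intro n
    rw [Set.mem_univ_pi]
    intro j
    have h1 : |a n j| ≤ 2 * ‖e j‖ := by
      calc |a n j| ≤ ‖F n‖ * ‖e j‖ := abs_real_inner_le_norm _ _
        _ ≤ 2 * ‖e j‖ := by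
            exact mul_le_mul_of_nonneg_right (hFnorm n) (norm_nonneg _)
    exact abs_le.mp h1
  have hKcomp : IsCompact (Set.pi Set.univ fun j : ℕ => Set.Icc (-(2 * ‖e j‖)) (2 * ‖e j‖)) :=
    isCompact_univ_pi fun j => isCompact_Icc
  obtain ⟨L, -, φ, hφ, hconv⟩ := hKcomp.tendsto_subseq haK
  have hconv' : ∀ j, Tendsto (fun k => a (φ k) j) atTop (𝓝 (L j)) := fun j =>
    tendsto_pi_nhds.mp hconv j
  -- Step G: the limit functional on all of L²
  have key : ∀ h : Lp ℝ 2 σ, ∃ l : ℝ,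
      Tendsto (fun k => (inner ℝ (F (φ k)) h : ℝ)) atTop (𝓝 l) := by
    intro h
    apply cauchySeq_tendsto_of_complete
    rw [Metric.cauchySeq_iff]
    intro ε hε
    obtain ⟨j, hj⟩ := he.exists_dist_lt h (show (0 : ℝ) < ε / 8 by linarith)
    have hcj : CauchySeq (fun k => a (φ k) j) := (hconv' j).cauchySeq
    rw [Metric.cauchySeq_iff] at hcj
    obtain ⟨N, hN⟩ := hcj (ε / 4) (by linarith)
    refine ⟨N, fun m hm n hn => ?_⟩
    have hest : ∀ k, |(inner ℝ (F (φ k)) h : ℝ) - a (φ k) j| ≤ 2 * (ε / 8) := by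
      intro k
      have h1 : (inner ℝ (F (φ k)) h : ℝ) - a (φ k) j = (inner ℝ (F (φ k)) (h - e j) : ℝ) := by
        rw [hadef]; simp [inner_sub_right]
      rw [h1]
      calc |(inner ℝ (F (φ k)) (h - e j) : ℝ)| ≤ ‖F (φ k)‖ * ‖h - e j‖ :=
            abs_real_inner_le_norm _ _
        _ ≤ 2 * ‖h - e j‖ := mul_le_mul_of_nonneg_right (hFnorm _) (norm_nonneg _)
        _ ≤ 2 * (ε / 8) := by
            refine mul_le_mul_of_nonneg_left ?_ (by norm_num)
            rw [← dist_eq_norm]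
            exact le_of_lt hj
    have h2 := hN m hm n hn
    rw [Real.dist_eq] at h2 ⊢
    have h3 := hest m
    have h4 := hest n
    have h5 : |(inner ℝ (F (φ m)) h : ℝ) - (inner ℝ (F (φ n)) h : ℝ)|
        ≤ |(inner ℝ (F (φ m)) h : ℝ) - a (φ m) j| + |a (φ m) j - a (φ n) j|
          + |a (φ n) j - (inner ℝ (F (φ n)) h : ℝ)| := by
      have := abs_sub_le ((inner ℝ (F (φ m)) h : ℝ)) (a (φ m) j) ((inner ℝ (F (φ n)) h : ℝ))
      have := abs_sub_le (a (φ m) j) (a (φ n) j) ((inner ℝ (F (φ n)) h : ℝ))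
      calc |(inner ℝ (F (φ m)) h : ℝ) - (inner ℝ (F (φ n)) h : ℝ)|
          ≤ |(inner ℝ (F (φ m)) h : ℝ) - a (φ m) j|
            + |a (φ m) j - (inner ℝ (F (φ n)) h : ℝ)| := abs_sub_le _ _ _
        _ ≤ |(inner ℝ (F (φ m)) h : ℝ) - a (φ m) j| + (|a (φ m) j - a (φ n) j|
            + |a (φ n) j - (inner ℝ (F (φ n)) h : ℝ)|) := by
            have := abs_sub_le (a (φ m) j) (a (φ n) j) ((inner ℝ (F (φ n)) h : ℝ))
            linarith
        _ = _ := by ring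
    have h6 : |a (φ n) j - (inner ℝ (F (φ n)) h : ℝ)| ≤ 2 * (ε / 8) := by
      rw [abs_sub_comm]; exact h4
    linarith
  choose Lf hLf using key
  have hadd : ∀ h₁ h₂, Lf (h₁ + h₂) = Lf h₁ + Lf h₂ := by
    intro h₁ h₂
    refine tendsto_nhds_unique (hLf (h₁ + h₂)) ?_
    exact ((hLf h₁).add (hLf h₂)).congr fun k => (inner_add_right _ _ _).symm
  have hsmul : ∀ (c : ℝ) h, Lf (c • h) = c * Lf h := by
    intro c h
    refine tendsto_nhds_unique (hLf (c • h)) ?_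
    exact ((hLf h).const_mul c).congr fun k => (real_inner_smul_right _ _ _).symm
  have hbdd : ∀ h, ‖Lf h‖ ≤ 2 * ‖h‖ := by
    intro h
    rw [Real.norm_eq_abs]
    refine le_of_tendsto (hLf h).abs (Eventually.of_forall fun k => ?_)
    calc |(inner ℝ (F (φ k)) h : ℝ)| ≤ ‖F (φ k)‖ * ‖h‖ := abs_real_inner_le_norm _ _
      _ ≤ 2 * ‖h‖ := mul_le_mul_of_nonneg_right (hFnorm _) (norm_nonneg _)
  set Λ : Lp ℝ 2 σ →L[ℝ] ℝ := LinearMap.mkContinuous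
    { toFun := Lf, map_add' := hadd, map_smul' := by intro c h; simpa using hsmul c h } 2
    hbdd with hΛdef
  set g₀ : Lp ℝ 2 σ := (InnerProductSpace.toDual ℝ (Lp ℝ 2 σ)).symm Λ with hg₀def
  have hg₀T : ∀ h, Tendsto (fun k => (inner ℝ (F (φ k)) h : ℝ)) atTop
      (𝓝 (inner ℝ g₀ h : ℝ)) := by
    intro h
    have h1 : (inner ℝ g₀ h : ℝ) = Lf h := by
      rw [hg₀def, InnerProductSpace.toDual_symm_apply]
      simp [hΛdef]
    rw [h1]
    exact hLf h
  -- translation to integrals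
  have hip : ∀ (n : ℕ) (h : X → ℝ) (hh : MemLp h 2 σ),
      (inner ℝ (F n) (hh.toLp h) : ℝ) = ∫ y, f n y * h y ∂σ := by
    intro n h hh
    rw [L2.inner_def]
    refine integral_congr_ae ?_
    filter_upwards [(hmem n).coeFn_toLp, hh.coeFn_toLp] with y h1 h2
    rw [RCLike.inner_apply]
    simp [h1, h2, hFdef, mul_comm]
  have hipg : ∀ (h : X → ℝ) (hh : MemLp h 2 σ),
      (inner ℝ g₀ (hh.toLp h) : ℝ) = ∫ y, (g₀ : X → ℝ) y * h y ∂σ := by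
    intro h hh
    rw [L2.inner_def]
    refine integral_congr_ae ?_
    filter_upwards [hh.coeFn_toLp] with y h2
    rw [RCLike.inner_apply]
    simp [h2]
    rw [mul_comm]
  have hweak : ∀ (h : X → ℝ) (hh : MemLp h 2 σ),
      Tendsto (fun k => ∫ y, f (φ k) y * h y ∂σ) atTop
        (𝓝 (∫ y, (g₀ : X → ℝ) y * h y ∂σ)) := by
    intro h hh
    have h1 := hg₀T (hh.toLp h)
    rw [hipg h hh] at h1
    exact h1.congr fun k => hip (φ k) h hh
  -- set integrals converge
  have hg₀int : Integrable (g₀ : X → ℝ) σ := (Lp.memLp g₀).integrable one_le_two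
  have hsetT : ∀ s : Set X, MeasurableSet s →
      Tendsto (fun k => ∫ y in s, f (φ k) y ∂σ) atTop
        (𝓝 (∫ y in s, (g₀ : X → ℝ) y ∂σ)) := by
    intro s hs
    have hhmem : MemLp (s.indicator (1 : X → ℝ)) 2 σ :=
      MemLp.of_bound (measurable_one.indicator hs).aestronglyMeasurable 1
        (ae_of_all _ fun y => by
          by_cases hy : y ∈ s <;>
            simp [Set.indicator_of_mem, Set.indicator_of_notMem, hy])
    have h1 := hweak _ hhmem
    have e1 : ∀ u : X → ℝ, (fun y => u y * s.indicator (1 : X → ℝ) y) = s.indicator u := by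
      intro u; funext y
      by_cases hy : y ∈ s <;>
        simp [Set.indicator_of_mem, Set.indicator_of_notMem, hy]
    have e2 : ∀ (u : X → ℝ), ∫ y, u y * s.indicator (1 : X → ℝ) y ∂σ = ∫ y in s, u y ∂σ := by
      intro u
      rw [show (fun y => u y * s.indicator (1 : X → ℝ) y) = s.indicator u from e1 u]
      exact integral_indicator hs
    simp only [e2] at h1
    exact h1
  have han : 0 ≤ᵐ[σ] (g₀ : X → ℝ) := by
    refine ae_nonneg_of_forall_setIntegral_nonneg hg₀int fun s hs _ => ?_
    refine ge_of_tendsto' (hsetT s hs) fun k => ?_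
    exact setIntegral_nonneg hs fun y _ => (hf_bd _ y).1
  have hle : (g₀ : X → ℝ) ≤ᵐ[σ] 1 := by
    have h2 : 0 ≤ᵐ[σ] (fun y => 1 - (g₀ : X → ℝ) y) := by
      refine ae_nonneg_of_forall_setIntegral_nonneg
        ((integrable_const (1 : ℝ)).sub hg₀int) fun s hs hsfin => ?_
      rw [integral_sub (integrable_const (1 : ℝ)).restrict hg₀int.restrict, sub_nonneg]
      refine le_of_tendsto' (hsetT s hs) fun k => ?_
      refine integral_mono ((hmem (φ k)).integrable one_le_two).restrict
        (integrable_const (1 : ℝ)).restrict fun y => (hf_bd _ y).2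
    filter_upwards [h2] with y hy
    have hy' : (0 : ℝ) ≤ 1 - (g₀ : X → ℝ) y := hy
    have : (g₀ : X → ℝ) y ≤ 1 := by linarith
    simpa using this
  have hg₀meas : Measurable (g₀ : X → ℝ) := (Lp.stronglyMeasurable g₀).measurable
  set g : X → ℝ := fun y => max 0 (min ((g₀ : X → ℝ) y) 1) with hgdef
  have hgmeas : Measurable g := measurable_const.max (hg₀meas.min measurable_const)
  have hgbd : ∀ y, 0 ≤ g y ∧ g y ≤ 1 := fun y =>
    ⟨le_max_left _ _, max_le zero_le_one (min_le_right _ _)⟩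
  have hgae : g =ᵐ[σ] (g₀ : X → ℝ) := by
    filter_upwards [han, hle] with y h1 h2
    have h1' : (0 : ℝ) ≤ (g₀ : X → ℝ) y := h1
    have h2' : (g₀ : X → ℝ) y ≤ 1 := h2
    rw [hgdef]
    simp only
    rw [min_eq_left h2', max_eq_right h1']
  refine ⟨φ, hφ, g, hgmeas, hgbd, ?_⟩
  intro z hz
  haveI : IsFiniteMeasure (H z) := ⟨lt_of_le_of_lt (hH_sub z hz) one_lt_top⟩
  have hac := habs z hz
  set ρ : X → ℝ := fun y => ((H z).rnDeriv σ y).toReal with hρdef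
  have hρmeas : Measurable ρ := (Measure.measurable_rnDeriv _ _).ennreal_toReal
  have hρint : Integrable ρ σ := Measure.integrable_toReal_rnDeriv
  have hρ0 : ∀ y, 0 ≤ ρ y := fun y => ENNReal.toReal_nonneg
  have hre : ∀ h : X → ℝ, ∫ y, ρ y * h y ∂σ = ∫ y, h y ∂(H z) := by
    intro h
    have h1 := integral_rnDeriv_smul (μ := H z) (ν := σ) hac (f := h)
    simpa [smul_eq_mul] using h1
  have hgoal1 : (fun k => ∫ y, f (φ k) y ∂(H z)) = fun k => ∫ y, ρ y * f (φ k) y ∂σ :=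
    funext fun k => (hre _).symm
  rw [hgoal1, ← hre g]
  -- integrability of products
  have hint : ∀ h : X → ℝ, Measurable h → (∀ y, |h y| ≤ 1) →
      Integrable (fun y => ρ y * h y) σ := by
    intro h hm hb
    have h1 := hρint.bdd_mul hm.aestronglyMeasurable
      (ae_of_all _ fun y => by rw [Real.norm_eq_abs]; exact hb y)
    exact h1.congr (ae_of_all _ fun y => mul_comm (h y) (ρ y))
  -- truncation
  have htrunc : ∀ ε : ℝ, 0 < ε → ∃ M : ℝ, 0 ≤ M ∧
      ∫ y, (ρ y - min (ρ y) M) ∂σ < ε := by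
    intro ε hε
    have hT : Tendsto (fun M : ℕ => ∫ y, (ρ y - min (ρ y) (M : ℝ)) ∂σ) atTop
        (𝓝 (∫ y, (0 : ℝ) ∂σ)) := by
      refine tendsto_integral_of_dominated_convergence ρ ?_ hρint ?_ ?_
      · intro n
        exact (hρmeas.sub (hρmeas.min measurable_const)).aestronglyMeasurable
      · intro n
        refine ae_of_all _ fun y => ?_
        rw [Real.norm_eq_abs, abs_of_nonneg (sub_nonneg.mpr (min_le_left _ _))]
        have h1 : 0 ≤ min (ρ y) (n : ℝ) := le_min (hρ0 y) (Nat.cast_nonneg n)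
        linarith
      · refine ae_of_all _ fun y => ?_
        have h1 : ∀ᶠ n : ℕ in atTop, ρ y - min (ρ y) (n : ℝ) = 0 := by
          filter_upwards [eventually_ge_atTop ⌈ρ y⌉₊] with n hn
          rw [min_eq_left, sub_self]
          calc ρ y ≤ (⌈ρ y⌉₊ : ℝ) := Nat.le_ceil _
            _ ≤ n := Nat.cast_le.mpr hn
        exact Tendsto.congr' (h1.mono fun n hn => hn.symm) tendsto_const_nhds
    rw [integral_zero] at hT
    obtain ⟨n, hn⟩ := (hT.eventually (eventually_lt_nhds hε)).exists
    exact ⟨n, Nat.cast_nonneg n, hn⟩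
  -- final ε/3 argument
  rw [Metric.tendsto_atTop]
  intro ε hε
  obtain ⟨M, hM0, hMδ⟩ := htrunc (ε / 3) (by linarith)
  set ρM : X → ℝ := fun y => min (ρ y) M with hρMdef
  have hρMmem : MemLp ρM 2 σ :=
    MemLp.of_bound (hρmeas.min measurable_const).aestronglyMeasurable M
      (ae_of_all _ fun y => by
        rw [Real.norm_eq_abs, abs_of_nonneg (le_min (hρ0 y) hM0)]
        exact min_le_right _ _)
  have hconvM : Tendsto (fun k => ∫ y, ρM y * f (φ k) y ∂σ) atTop
      (𝓝 (∫ y, ρM y * g y ∂σ)) := by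
    have h1 := hweak ρM hρMmem
    have e2 : ∫ y, (g₀ : X → ℝ) y * ρM y ∂σ = ∫ y, ρM y * g y ∂σ := by
      refine integral_congr_ae ?_
      filter_upwards [hgae] with y hy
      rw [← hy, mul_comm]
    rw [e2] at h1
    exact h1.congr fun k => integral_congr_ae (ae_of_all _ fun y => mul_comm _ _)
  have hρMint : Integrable ρM σ := hρMmem.integrable one_le_two
  have hEst : ∀ h : X → ℝ, Measurable h → (∀ y, |h y| ≤ 1) →
      |(∫ y, ρ y * h y ∂σ) - ∫ y, ρM y * h y ∂σ| ≤ ∫ y, (ρ y - ρM y) ∂σ := by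
    intro h hm hb
    have hint1 := hint h hm hb
    have hint2 : Integrable (fun y => ρM y * h y) σ :=
      (hρMint.bdd_mul hm.aestronglyMeasurable
        (ae_of_all _ fun y => by rw [Real.norm_eq_abs]; exact hb y)).congr
        (ae_of_all _ fun y => mul_comm (h y) (ρM y))
    rw [← integral_sub hint1 hint2]
    calc |∫ y, (ρ y * h y - ρM y * h y) ∂σ| ≤ ∫ y, |ρ y * h y - ρM y * h y| ∂σ :=
          by
          simpa [Real.norm_eq_abs] using
            norm_integral_le_integral_norm (μ := σ) (fun y => ρ y * h y - ρM y * h y)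
      _ ≤ ∫ y, (ρ y - ρM y) ∂σ := by
          refine integral_mono (hint1.sub hint2).abs (hρint.sub hρMint) fun y => ?_
          have e3 : ρ y * h y - ρM y * h y = (ρ y - ρM y) * h y := by ring
          have h4 : 0 ≤ ρ y - ρM y := sub_nonneg.mpr (min_le_left _ _)
          rw [e3, abs_mul, abs_of_nonneg h4]
          calc (ρ y - ρM y) * |h y| ≤ (ρ y - ρM y) * 1 :=
                mul_le_mul_of_nonneg_left (hb y) h4
            _ = ρ y - ρM y := mul_one _
  obtain ⟨N, hN⟩ := (Metric.tendsto_atTop.mp hconvM) (ε / 3) (by linarith)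
  refine ⟨N, fun k hk => ?_⟩
  have h1 := hEst (f (φ k)) (hf_meas _) (fun y => by
    rw [abs_of_nonneg (hf_bd _ y).1]; exact (hf_bd _ y).2)
  have h2 := hEst g hgmeas (fun y => by
    rw [abs_of_nonneg (hgbd y).1]; exact (hgbd y).2)
  have h3 := hN k hk
  rw [Real.dist_eq] at h3 ⊢
  have habc : |(∫ y, ρ y * f (φ k) y ∂σ) - ∫ y, ρ y * g y ∂σ|
      ≤ |(∫ y, ρ y * f (φ k) y ∂σ) - ∫ y, ρM y * f (φ k) y ∂σ|
        + |(∫ y, ρM y * f (φ k) y ∂σ) - ∫ y, ρM y * g y ∂σ|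
        + |(∫ y, ρM y * g y ∂σ) - ∫ y, ρ y * g y ∂σ| := by
    have hA := abs_sub_le (∫ y, ρ y * f (φ k) y ∂σ) (∫ y, ρM y * f (φ k) y ∂σ)
      (∫ y, ρ y * g y ∂σ)
    have hB := abs_sub_le (∫ y, ρM y * f (φ k) y ∂σ) (∫ y, ρM y * g y ∂σ)
      (∫ y, ρ y * g y ∂σ)
    linarith
  have h2' : |(∫ y, ρM y * g y ∂σ) - ∫ y, ρ y * g y ∂σ| ≤ ∫ y, (ρ y - ρM y) ∂σ := by
    rw [abs_sub_comm]; exact h2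
  linarith
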